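/- Let Σ be a finite alphabet and w, w̃ ∈ Σ* with m := ι(w) = ι(w̃) < k. Then w ∼_k w̃ if and only if α_i ∼_{k−m} α̃_i for all i ∈ {0,1,…,m} and w ∼_k w', where w' := α₀β̃₁α₁β̃₂α₂⋯β̃_mα_m is the word obtained by combining the α-factors of w with the β-factors of w̃. -/

import Mathlib

open List

variable {α : Type*} [DecidableEq α] [Fintype α]

/-- Simon `k`-congruence: `u` and `v` have the same scattered factors
(subsequences) of length at most `k`. -/
def SimonCongr (k : ℕ) (u v : List α) : Prop :=
  ∀ s : List α, s.length ≤ k → (s.Sublist u ↔ s.Sublist v)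

/-- `w` is `k`-universal with respect to the alphabet `S`: every word of length `k`
over `S` is a scattered factor of `w`. -/
def UniversalOn (S : Finset α) (k : ℕ) (w : List α) : Prop :=
  ∀ s : List α, s.length = k → (∀ x ∈ s, x ∈ S) → s.Sublist w

/-- The universality index of `w` w.r.t. the alphabet `S`. -/
noncomputable def iotaOn (S : Finset α) (w : List α) : ℕ :=
  sSup {k | UniversalOn S k w}

/-- The universality index of `w` w.r.t. the full alphabet. -/
noncomputable def iotaUniv (w : List α) : ℕ := iotaOn Finset.univ w

/-- `a` is an arch w.r.t. `S`: it contains every letter of `S`, and its last letter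
belongs to `S` and occurs exactly once in `a`. -/
def IsArchOn (S : Finset α) (a : List α) : Prop :=
  (∀ x ∈ S, x ∈ a) ∧ ∃ a' x, a = a' ++ [x] ∧ x ∈ S ∧ x ∉ a'

/-- `(ars, r)` is the arch factorization of `w` w.r.t. `S`. -/
def IsArchFactOn (S : Finset α) (w : List α) (ars : List (List α)) (r : List α) : Prop :=
  w = ars.flatten ++ r ∧ (∀ a ∈ ars, IsArchOn S a) ∧ ¬ (∀ x ∈ S, x ∈ r)

/-- `(A, B)` is the α-β-factorization of `w` with `m` arches:
`αᵢ₋₁βᵢ` (for `i ∈ [m]`) together with rest `α_m` is the arch factorization of `w`, and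
`(β_{m-i}α_{m-i})^R` together with rest `α₀^R` is the arch factorization of `w^R`. -/
def IsAlphaBetaFact (w : List α) (m : ℕ) (A B : ℕ → List α) : Prop :=
  IsArchFactOn Finset.univ w (List.ofFn fun i : Fin m => A i.val ++ B (i.val + 1)) (A m) ∧
  IsArchFactOn Finset.univ w.reverse
    (List.ofFn fun i : Fin m => (B (m - i.val) ++ A (m - i.val)).reverse) ((A 0).reverse)

/-- The concatenation `αᵢ βᵢ₊₁ αᵢ₊₁ ⋯ βⱼ αⱼ`. -/
def abSeg (A B : ℕ → List α) (i j : ℕ) : List α :=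
  A i ++ (((List.Ico (i + 1) (j + 1)).map fun l => B l ++ A l).flatten)

/-- The core of a `β`-factor: the factor with its first and last letter removed. -/
def coreOf (b : List α) : List α := (b.drop 1).dropLast

section Helpers

private lemma simonCongr_symm {k : ℕ} {u v : List α} (h : SimonCongr k u v) :
    SimonCongr k v u := fun s hs => (h s hs).symm

private lemma simonCongr_trans {k : ℕ} {u v z : List α} (h1 : SimonCongr k u v)
    (h2 : SimonCongr k v z) : SimonCongr k u z := fun s hs => (h1 s hs).trans (h2 s hs)

/-- If `d ∉ v`, then any embedding of `d :: t` into `v ++ d :: Z` puts `t` into `Z`. -/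
private lemma once_left {d : α} {t Z : List α} : ∀ {v : List α}, d ∉ v →
    (d :: t) <+ v ++ d :: Z → t <+ Z
  | [], _, h => by
    cases h with
    | cons _ h' => exact (List.sublist_cons_self d t).trans h'
    | cons_cons _ h' => exact h'
  | x :: v, hd, h => by
    simp only [List.cons_append] at h
    cases h with
    | cons _ h' => exact once_left (fun hm => hd (List.mem_cons_of_mem _ hm)) h'
    | cons_cons _ h' => exact absurd List.mem_cons_self hd

/-- Marker lemma (left): markers occurring once at the ends of their blocks force
the remainder past all the blocks. -/
private lemma mark_left : ∀ (P : List (List α × α)) {t R : List α},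
    (∀ p ∈ P, p.2 ∉ p.1) →
    ((P.map Prod.snd) ++ t) <+ ((P.map fun p => p.1 ++ [p.2]).flatten ++ R) → t <+ R
  | [], t, R, _, h => by simpa using h
  | (v, d) :: P, t, R, hp, h => by
    apply mark_left P (fun p hp' => hp p (List.mem_cons_of_mem _ hp'))
    have h' : (d :: (P.map Prod.snd ++ t)) <+
        v ++ d :: (((P.map fun p => p.1 ++ [p.2]).flatten) ++ R) := by
      simpa [List.append_assoc] using h
    exact once_left (hp (v, d) List.mem_cons_self) h'

/-- Marker lemma (right): markers occurring once at the heads of their blocks force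
the beginning before all the blocks. -/
private lemma mark_right (P : List (List α × α)) {t R : List α}
    (hp : ∀ p ∈ P, p.2 ∉ p.1)
    (h : (t ++ P.map Prod.snd) <+ R ++ (P.map fun p => p.2 :: p.1).flatten) : t <+ R := by
  have h2 := h.reverse
  rw [List.reverse_append, List.reverse_append, List.reverse_flatten] at h2
  have key : ((P.map fun p => p.2 :: p.1).map List.reverse).reverse
      = (P.reverse.map fun p => (p.1.reverse, p.2)).map fun q => q.1 ++ [q.2] := by
    rw [← List.map_reverse, ← List.map_reverse, List.map_map, List.map_map]
    refine List.map_congr_left fun p _ => ?_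
    simp
  rw [key, ← List.map_reverse] at h2
  have hmk2 : (P.reverse.map Prod.snd)
      = ((P.reverse.map fun p => (p.1.reverse, p.2)).map Prod.snd) := by
    rw [List.map_map]
    exact List.map_congr_left fun p _ => rfl
  rw [hmk2] at h2
  have h3 := mark_left (P.reverse.map fun p => (p.1.reverse, p.2))
    (by
      intro q hq
      obtain ⟨p, hp', rfl⟩ := List.mem_map.mp hq
      simpa using hp p (List.mem_reverse.mp hp')) h2
  exact List.reverse_sublist.mp h3

/-- A word of letters embeds into a concatenation of as many universal blocks. -/
private lemma letters_embed : ∀ (Bs : List (List α)) (M : List α),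
    (∀ b ∈ Bs, ∀ x : α, x ∈ b) → M.length = Bs.length → M <+ Bs.flatten
  | [], M, _, hl => by
    have : M = [] := List.length_eq_zero_iff.mp (by simpa using hl)
    simp [this]
  | b :: Bs, M, hb, hl => by
    cases M with
    | nil => exact List.nil_sublist _
    | cons x M =>
      have hl' : M.length = Bs.length := by simpa using hl
      have h1 : ([x] ++ M) <+ (b ++ Bs.flatten) :=
        List.Sublist.append (List.singleton_sublist.mpr (hb b (by simp) x))
          (letters_embed Bs M (fun b' h' => hb b' (by simp [h'])) hl')
      simpa using h1

/-- Greedy embedding from the left through universal blocks. -/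
private lemma greedy_left : ∀ (Bs : List (List α)) {s T : List α},
    (∀ b ∈ Bs, ∀ x : α, x ∈ b) → s <+ Bs.flatten ++ T →
    ∃ u v, s = u ++ v ∧ u <+ Bs.flatten ∧ v <+ T ∧
      (v.length + Bs.length ≤ s.length ∨ v = [])
  | [], s, T, _, h => ⟨[], s, rfl, List.nil_sublist _, by simpa using h, Or.inl (by simp)⟩
  | b :: Bs, s, T, hb, h => by
    rw [List.flatten_cons, List.append_assoc] at h
    obtain ⟨s₁, s₂, hse, hs₁, hs₂⟩ := List.sublist_append_iff.mp h
    have hbs : ∀ b' ∈ Bs, ∀ x : α, x ∈ b' := fun b' h' x => hb b' (by simp [h']) x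
    cases s₁ with
    | nil =>
      cases s₂ with
      | nil =>
        refine ⟨[], [], by simpa using hse, List.nil_sublist _, List.nil_sublist _, Or.inr rfl⟩
      | cons x s' =>
        have hs' : s' <+ Bs.flatten ++ T := (List.sublist_cons_self x s').trans hs₂
        obtain ⟨u, v, hsp, hu, hv, hlen⟩ := greedy_left Bs hbs hs'
        refine ⟨x :: u, v, by simp [hse, hsp], ?_, hv, ?_⟩
        · have : ([x] ++ u) <+ (b ++ Bs.flatten) :=
            (List.singleton_sublist.mpr (hb b (by simp) x)).append hu
          simpa using this
        · rcases hlen with h1 | h2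
          · left
            have : s.length = s'.length + 1 := by simp [hse]
            simp only [this, List.length_cons]
            omega
          · right; exact h2
    | cons y s₁' =>
      obtain ⟨u, v, hsp, hu, hv, hlen⟩ := greedy_left Bs hbs hs₂
      refine ⟨(y :: s₁') ++ u, v, by simp [hse, hsp], hs₁.append hu, hv, ?_⟩
      rcases hlen with h1 | h2
      · left
        have : s.length = s₁'.length + 1 + s₂.length := by simp [hse]; omega
        have h2 : s₂.length = u.length + v.length := by simp [hsp]
        simp only [this, List.length_cons]
        omega
      · right; exact h2

/-- Greedy embedding from the right through universal blocks. -/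
private lemma greedy_right (Bs : List (List α)) {s T : List α}
    (hb : ∀ b ∈ Bs, ∀ x : α, x ∈ b) (h : s <+ T ++ Bs.flatten) :
    ∃ v z, s = v ++ z ∧ v <+ T ∧ z <+ Bs.flatten ∧
      (v.length + Bs.length ≤ s.length ∨ v = []) := by
  have hfl : (Bs.reverse.map List.reverse).flatten = Bs.flatten.reverse := by
    rw [List.reverse_flatten, List.map_reverse]
  have h2 : s.reverse <+ (Bs.reverse.map List.reverse).flatten ++ T.reverse := by
    rw [hfl]
    simpa [List.reverse_append] using h.reverse
  obtain ⟨u, v, hsp, hu, hv, hlen⟩ := greedy_left (Bs.reverse.map List.reverse)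
    (by
      intro b' hb' x
      obtain ⟨c, hc, rfl⟩ := List.mem_map.mp hb'
      simpa using hb c (List.mem_reverse.mp hc) x) h2
  have hs : s = v.reverse ++ u.reverse := by
    have := congrArg List.reverse hsp
    simpa [List.reverse_append] using this
  refine ⟨v.reverse, u.reverse, hs, by simpa using hv.reverse, ?_, ?_⟩
  · rw [hfl] at hu
    simpa using hu.reverse
  · rcases hlen with h1 | h1
    · left
      simpa using h1
    · right
      simp [h1]

/-- Single replacement: replacing the distinguished middle factor by a congruent
one preserves scattered factors of length at most `k`. -/
private lemma srl {k : ℕ} (L R : List (List α)) (x y : List α)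
    (hL : ∀ b ∈ L, ∀ a : α, a ∈ b) (hR : ∀ b ∈ R, ∀ a : α, a ∈ b)
    (hxy : ∀ v : List α, v.length + (L.length + R.length) ≤ k → v <+ x → v <+ y)
    {s : List α} (hs : s.length ≤ k) (h : s <+ L.flatten ++ (x ++ R.flatten)) :
    s <+ L.flatten ++ (y ++ R.flatten) := by
  obtain ⟨u, v₁, rfl, hu, hv₁, hlen1⟩ := greedy_left L hL h
  obtain ⟨v, z, rfl, hv, hz, hlen2⟩ := greedy_right R hR hv₁
  by_cases hveq : v = []
  · subst hveq
    exact hu.append ((List.nil_sublist y).append hz)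
  · have h2 : v.length + R.length ≤ v.length + z.length := by
      simpa using hlen2.resolve_right hveq
    have hne : v ++ z ≠ [] := fun hh => hveq (List.append_eq_nil_iff.mp hh).1
    have h1' : (v ++ z).length + L.length ≤ (u ++ (v ++ z)).length :=
      hlen1.resolve_right hne
    have hvk : v.length + (L.length + R.length) ≤ k := by
      have hlen : (u ++ (v ++ z)).length ≤ k := hs
      simp only [List.length_append] at h1' hlen
      omega
    exact hu.append (((hxy v hvk hv).append hz))
/-- Regrouping step for the alternating factorization. -/
private lemma seg_step (A B : ℕ → List α) {m t : ℕ} (h : t < m) :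
    ((List.range t).map fun l => A l ++ B (l+1)).flatten ++
      (A t ++ ((List.Ico (t+1) (m+1)).map fun l => B l ++ A l).flatten)
    = ((List.range (t+1)).map fun l => A l ++ B (l+1)).flatten ++
      (A (t+1) ++ ((List.Ico (t+2) (m+1)).map fun l => B l ++ A l).flatten) := by
  have hico : List.Ico (t+1) (m+1) = (t+1) :: List.Ico (t+2) (m+1) :=
    List.Ico.eq_cons (by omega)
  rw [hico, List.range_succ]
  simp [List.append_assoc]

private lemma seg_all (A B : ℕ → List α) (m : ℕ) :
    ∀ (d t : ℕ), t + d = m →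
    ((List.range t).map fun l => A l ++ B (l+1)).flatten ++
      (A t ++ ((List.Ico (t+1) (m+1)).map fun l => B l ++ A l).flatten)
    = ((List.range m).map fun l => A l ++ B (l+1)).flatten ++ A m
  | 0, t, h => by
    subst h
    rw [List.Ico.eq_nil_of_le (by omega)]
    simp
  | d+1, t, h => by
    rw [seg_step A B (show t < m by omega)]
    exact seg_all A B m d (t+1) (by omega)

/-- The arch grouping of the word equals the reverse-arch grouping, split at
position `t`. -/
private lemma seg_decomp (A B : ℕ → List α) {m t : ℕ} (h : t ≤ m) :
    ((List.range m).map fun l => A l ++ B (l+1)).flatten ++ A m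
    = ((List.range t).map fun l => A l ++ B (l+1)).flatten ++
      (A t ++ ((List.Ico (t+1) (m+1)).map fun l => B l ++ A l).flatten) :=
  (seg_all A B m (m - t) t (by omega)).symm

private lemma ofFn_flatten_eq (g : ℕ → List α) (m : ℕ) :
    (List.ofFn fun i : Fin m => g i.val) = (List.range m).map g := by
  apply List.ext_getElem
  · simp
  · intro i h1 h2
    simp

private lemma abf_nonempty {w : List α} {m : ℕ} {A B : ℕ → List α}
    (hw : IsAlphaBetaFact w m A B) : Nonempty α := by
  obtain ⟨⟨-, -, hr⟩, -⟩ := hw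
  by_contra hne
  exact hr fun x _ => (hne ⟨x⟩).elim

/-- All the structural facts we need from an α-β-factorization. -/
private lemma abf_facts {w : List α} {m : ℕ} {A B : ℕ → List α}
    (hw : IsAlphaBetaFact w m A B) :
    (∀ t ≤ m, w = ((List.range t).map fun l => A l ++ B (l+1)).flatten
        ++ (A t ++ ((List.Ico (t+1) (m+1)).map fun l => B l ++ A l).flatten))
    ∧ (∀ l < m, ∀ x : α, x ∈ A l ++ B (l+1))
    ∧ (∀ l, 0 < l → l ≤ m → ∀ x : α, x ∈ B l ++ A l)
    ∧ (∀ l < m, ∃ v c, A l ++ B (l+1) = v ++ [c] ∧ c ∉ v)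
    ∧ (∀ l, 0 < l → l ≤ m → ∃ e tl, B l ++ A l = e :: tl ∧ e ∉ tl) := by
  obtain ⟨⟨hw1, harch, -⟩, ⟨-, hrarch, -⟩⟩ := hw
  rw [ofFn_flatten_eq (fun l => A l ++ B (l+1)) m] at hw1
  have harch' : ∀ l < m, IsArchOn Finset.univ (A l ++ B (l+1)) := by
    intro l hl
    exact harch _ (by
      rw [List.mem_ofFn]
      exact ⟨⟨l, hl⟩, rfl⟩)
  have hrarch' : ∀ l, 0 < l → l ≤ m → IsArchOn Finset.univ ((B l ++ A l).reverse) := by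
    intro l h0 hm
    have hlt : m - l < m := by omega
    have hml : m - (m - l) = l := by omega
    refine hrarch _ (by
      rw [List.mem_ofFn]
      refine ⟨⟨m - l, hlt⟩, ?_⟩
      show (B (m - (m - l)) ++ A (m - (m - l))).reverse = (B l ++ A l).reverse
      rw [hml])
  refine ⟨?_, ?_, ?_, ?_, ?_⟩
  · intro t ht
    rw [hw1]
    exact seg_decomp A B ht
  · intro l hl x
    exact (harch' l hl).1 x (Finset.mem_univ x)
  · intro l h0 hm x
    exact List.mem_reverse.mp ((hrarch' l h0 hm).1 x (Finset.mem_univ x))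
  · intro l hl
    obtain ⟨v, c, hvc, -, hnc⟩ := (harch' l hl).2
    exact ⟨v, c, hvc, hnc⟩
  · intro l h0 hm
    obtain ⟨v, c, hvc, -, hnc⟩ := (hrarch' l h0 hm).2
    refine ⟨c, v.reverse, ?_, by simpa using hnc⟩
    have := congrArg List.reverse hvc
    simpa [List.reverse_append] using this

/-- Key extraction lemma: the scattered factors of length at most `k - m` of
corresponding α-factors transfer across the congruence. -/
private lemma fe {k m : ℕ} {w w' : List α} {A B A' B' : ℕ → List α}
    (hw : IsAlphaBetaFact w m A B) (hw' : IsAlphaBetaFact w' m A' B')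
    (hsim : SimonCongr k w w') (hmk : m ≤ k) {j : ℕ} (hj : j ≤ m)
    {u : List α} (hu : u.length ≤ k - m) (hUA : u <+ A j) : u <+ A' j := by
  obtain ⟨hseg, hbl, hbr, -, -⟩ := abf_facts hw
  obtain ⟨hseg', -, -, hmkL, hmkR⟩ := abf_facts hw'
  have hne : Nonempty α := abf_nonempty hw
  choose! vf cf h1 h2 using hmkL
  choose! ef tf h3 h4 using hmkR
  set M1 : List α := (List.range j).map cf with hM1
  set M2 : List α := (List.Ico (j+1) (m+1)).map ef with hM2
  -- the test word
  have hsub1 : M1 <+ ((List.range j).map fun l => A l ++ B (l+1)).flatten := by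
    apply letters_embed
    · intro b hb x
      obtain ⟨l, hl, rfl⟩ := List.mem_map.mp hb
      exact hbl l (lt_of_lt_of_le (List.mem_range.mp hl) hj) x
    · simp [hM1]
  have hsub3 : M2 <+ ((List.Ico (j+1) (m+1)).map fun l => B l ++ A l).flatten := by
    apply letters_embed
    · intro b hb x
      obtain ⟨l, hl, rfl⟩ := List.mem_map.mp hb
      obtain ⟨ha, hb'⟩ := List.Ico.mem.mp hl
      exact hbr l (by omega) (by omega) x
    · simp [hM2]
  have hsw : (M1 ++ (u ++ M2)) <+ w := by
    rw [hseg j hj]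
    exact hsub1.append (hUA.append hsub3)
  have hlen : (M1 ++ (u ++ M2)).length ≤ k := by
    simp only [List.length_append, hM1, hM2, List.length_map, List.length_range,
      List.Ico.length]
    omega
  have hsw' : (M1 ++ (u ++ M2)) <+ w' := (hsim _ hlen).mp hsw
  -- now trap `u` in `A' j` using the markers of `w'`
  set P1 : List (List α × α) := (List.range j).map fun l => (vf l, cf l) with hP1
  have hF1 : (P1.map fun p => p.1 ++ [p.2]).flatten
      = ((List.range j).map fun l => A' l ++ B' (l+1)).flatten := by
    rw [hP1, List.map_map]
    congr 1
    refine List.map_congr_left fun l hl => ?_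
    show vf l ++ [cf l] = A' l ++ B' (l+1)
    exact (h1 l (lt_of_lt_of_le (List.mem_range.mp hl) hj)).symm
  have hPM1 : P1.map Prod.snd = M1 := by
    rw [hP1, List.map_map, hM1]
    rfl
  have hstep1 : (u ++ M2) <+ A' j ++ ((List.Ico (j+1) (m+1)).map fun l => B' l ++ A' l).flatten := by
    apply mark_left P1
    · intro p hp
      obtain ⟨l, hl, rfl⟩ := List.mem_map.mp hp
      exact h2 l (lt_of_lt_of_le (List.mem_range.mp hl) hj)
    · rw [hPM1, hF1]
      rw [hseg' j hj] at hsw'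
      exact hsw'
  set P2 : List (List α × α) := (List.Ico (j+1) (m+1)).map fun l => (tf l, ef l) with hP2
  have hF2 : (P2.map fun p => p.2 :: p.1).flatten
      = ((List.Ico (j+1) (m+1)).map fun l => B' l ++ A' l).flatten := by
    rw [hP2, List.map_map]
    congr 1
    refine List.map_congr_left fun l hl => ?_
    obtain ⟨ha, hb'⟩ := List.Ico.mem.mp hl
    show ef l :: tf l = B' l ++ A' l
    exact (h3 l (by omega) (by omega)).symm
  have hPM2 : P2.map Prod.snd = M2 := by
    rw [hP2, List.map_map, hM2]
    rfl
  apply mark_right P2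
  · intro p hp
    obtain ⟨l, hl, rfl⟩ := List.mem_map.mp hp
    obtain ⟨ha, hb'⟩ := List.Ico.mem.mp hl
    exact h4 l (by omega) (by omega)
  · rw [hPM2, hF2]
    exact hstep1
private lemma abSeg_eq_range (C B : ℕ → List α) (m : ℕ) :
    abSeg C B 0 m
      = ((List.range m).map fun l => C l ++ B (l+1)).flatten ++ C m := by
  have h := seg_decomp C B (Nat.zero_le m)
  rw [h]
  simp [abSeg]

private lemma abSeg_decomp (C B : ℕ → List α) {m t : ℕ} (h : t ≤ m) :
    abSeg C B 0 m
      = ((List.range t).map fun l => C l ++ B (l+1)).flatten ++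
        (C t ++ ((List.Ico (t+1) (m+1)).map fun l => B l ++ C l).flatten) := by
  rw [abSeg_eq_range, seg_decomp C B h]

private lemma abSeg_congr {C D B : ℕ → List α} {m : ℕ} (h : ∀ l ≤ m, C l = D l) :
    abSeg C B 0 m = abSeg D B 0 m := by
  unfold abSeg
  rw [h 0 (Nat.zero_le m)]
  congr 1
  congr 1
  refine List.map_congr_left fun l hl => ?_
  obtain ⟨-, hb⟩ := List.Ico.mem.mp hl
  show B l ++ C l = B l ++ D l
  rw [h l (by omega)]

/-- Replacing all α-factors by `(k-m)`-congruent ones (keeping β-factors)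
preserves the `k`-congruence class. -/
private lemma chain_congr {k m : ℕ} (A A' B' : ℕ → List α)
    (hbl : ∀ j < m, ∀ a : α, a ∈ A' j ++ B' (j+1))
    (hbr : ∀ l, 0 < l → l ≤ m → ∀ a : α, a ∈ B' l ++ A' l)
    (halph : ∀ j ≤ m, ∀ a : α, a ∈ A' j → a ∈ A j)
    (hAA : ∀ j ≤ m, ∀ v : List α, v.length + m ≤ k → (v <+ A j ↔ v <+ A' j)) :
    SimonCongr k (abSeg A B' 0 m) (abSeg A' B' 0 m) := by
  have hstep : ∀ t ≤ m,
      SimonCongr k (abSeg (fun j => if j < t then A' j else A j) B' 0 m)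
        (abSeg (fun j => if j < t + 1 then A' j else A j) B' 0 m) := by
    intro t ht
    set L : List (List α) := (List.range t).map fun l => A' l ++ B' (l+1) with hL
    set R : List (List α) := (List.Ico (t+1) (m+1)).map fun l => B' l ++ A l with hR
    have e1 : abSeg (fun j => if j < t then A' j else A j) B' 0 m
        = L.flatten ++ (A t ++ R.flatten) := by
      rw [abSeg_decomp _ B' ht]
      congr 1
      · congr 1
        refine List.map_congr_left fun l hl => ?_
        show (if l < t then A' l else A l) ++ B' (l+1) = A' l ++ B' (l+1)
        rw [if_pos (List.mem_range.mp hl)]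
      · congr 1
        · show (if t < t then A' t else A t) = A t
          rw [if_neg (lt_irrefl t)]
        · congr 1
          refine List.map_congr_left fun l hl => ?_
          obtain ⟨ha, -⟩ := List.Ico.mem.mp hl
          show B' l ++ (if l < t then A' l else A l) = B' l ++ A l
          rw [if_neg (by omega)]
    have e2 : abSeg (fun j => if j < t + 1 then A' j else A j) B' 0 m
        = L.flatten ++ (A' t ++ R.flatten) := by
      rw [abSeg_decomp _ B' ht]
      congr 1
      · congr 1
        refine List.map_congr_left fun l hl => ?_
        show (if l < t + 1 then A' l else A l) ++ B' (l+1) = A' l ++ B' (l+1)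
        rw [if_pos (by have := List.mem_range.mp hl; omega)]
      · congr 1
        · show (if t < t + 1 then A' t else A t) = A' t
          rw [if_pos (by omega)]
        · congr 1
          refine List.map_congr_left fun l hl => ?_
          obtain ⟨ha, -⟩ := List.Ico.mem.mp hl
          show B' l ++ (if l < t + 1 then A' l else A l) = B' l ++ A l
          rw [if_neg (by omega)]
    have hLuniv : ∀ b ∈ L, ∀ a : α, a ∈ b := by
      intro b hb a
      obtain ⟨l, hl, rfl⟩ := List.mem_map.mp hb
      exact hbl l (by have := List.mem_range.mp hl; omega) a
    have hRuniv : ∀ b ∈ R, ∀ a : α, a ∈ b := by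
      intro b hb a
      obtain ⟨l, hl, rfl⟩ := List.mem_map.mp hb
      obtain ⟨ha, hb'⟩ := List.Ico.mem.mp hl
      have := hbr l (by omega) (by omega) a
      rcases List.mem_append.mp this with h | h
      · exact List.mem_append.mpr (Or.inl h)
      · exact List.mem_append.mpr (Or.inr (halph l (by omega) a h))
    have hlen : L.length + R.length = m := by
      simp only [hL, hR, List.length_map, List.length_range, List.Ico.length]
      omega
    intro s hs
    rw [e1, e2]
    constructor
    · intro h
      exact srl L R (A t) (A' t) hLuniv hRuniv
        (fun v hv => (hAA t ht v (by omega)).mp) hs h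
    · intro h
      exact srl L R (A' t) (A t) hLuniv hRuniv
        (fun v hv => (hAA t ht v (by omega)).mpr) hs h
  have haux : ∀ (d t : ℕ), t + d = m + 1 →
      SimonCongr k (abSeg (fun j => if j < t then A' j else A j) B' 0 m)
        (abSeg A' B' 0 m) := by
    intro d
    induction d with
    | zero =>
      intro t h
      have heq : abSeg (fun j => if j < t then A' j else A j) B' 0 m = abSeg A' B' 0 m :=
        abSeg_congr (fun l hl => if_pos (by omega))
      rw [heq]
      exact fun s _ => Iff.rfl
    | succ d ih =>
      intro t h
      exact simonCongr_trans (hstep t (by omega)) (ih (t+1) (by omega))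
  have h0 : abSeg A B' 0 m = abSeg (fun j => if j < 0 then A' j else A j) B' 0 m :=
    abSeg_congr (fun l hl => (if_neg (by omega)).symm)
  rw [h0]
  exact haux (m+1) 0 (by omega)

end Helpers
/-- `w ∼ₖ w̃` iff the `α`-factors are `(k−m)`-congruent and `w` is
`k`-congruent to the word obtained from `w`'s `α`-factors and `w̃`'s `β`-factors. -/
theorem simonCongr_iff_alpha_and_mixed (k m : ℕ) (w w' : List α) (A B A' B' : ℕ → List α)
    (hw : IsAlphaBetaFact w m A B) (hw' : IsAlphaBetaFact w' m A' B')
    (hiw : iotaUniv w = m) (hiw' : iotaUniv w' = m) (hmk : m < k) :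
    SimonCongr k w w' ↔
      ((∀ i ≤ m, SimonCongr (k - m) (A i) (A' i)) ∧
        SimonCongr k w (abSeg A B' 0 m)) := by
  have hmk' : m ≤ k := hmk.le
  obtain ⟨hseg', hbl', hbr', -, -⟩ := abf_facts hw'
  have hw'eq : w' = abSeg A' B' 0 m := by
    rw [abSeg_eq_range]
    exact hseg' m (le_refl m) |>.trans (seg_decomp A' B' (le_refl m)).symm
  -- chain lemma, given the α-congruences
  have hchain : (∀ i ≤ m, SimonCongr (k - m) (A i) (A' i)) →
      SimonCongr k (abSeg A B' 0 m) w' := by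
    intro hA
    have halph : ∀ j ≤ m, ∀ a : α, a ∈ A' j → a ∈ A j := by
      intro j hj a ha
      have h1 : ([a] : List α).length ≤ k - m := by simp; omega
      exact List.singleton_sublist.mp
        ((hA j hj [a] h1).mpr (List.singleton_sublist.mpr ha))
    have := chain_congr (k := k) A A' B' hbl' hbr' halph
      (fun j hj v hv => hA j hj v (by omega))
    rw [← hw'eq] at this
    exact this
  constructor
  · intro hsim
    have hA : ∀ i ≤ m, SimonCongr (k - m) (A i) (A' i) := by
      intro i hi s hs
      exact ⟨fun h => fe hw hw' hsim hmk' hi hs h,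
        fun h => fe hw' hw (simonCongr_symm hsim) hmk' hi hs h⟩
    exact ⟨hA, simonCongr_trans hsim (simonCongr_symm (hchain hA))⟩
  · rintro ⟨hA, hmix⟩
    exact simonCongr_trans hmix (hchain hA)
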